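/- Let Y be an extreme point (vertex) of the polytope of fractional allocations satisfying u_i(Y) ≥ c_i for all agents i (for given constants c_i), and suppose Y maximizes ∑_i u_i(Y) over this polytope. Then the consumption graph of Y is acyclic. -/

import Mathlib

/-- `X` is a fractional allocation: nonnegative entries, each object fully allocated. -/
def IsAlloc (n m : ℕ) (X : Fin n → Fin m → ℝ) : Prop :=
  (∀ i o, 0 ≤ X i o) ∧ ∀ o, ∑ i, X i o = 1

/-- Agent `i`'s additive utility under allocation `X` with utility matrix `U`. -/
def util {n m : ℕ} (U X : Fin n → Fin m → ℝ) (i : Fin n) : ℝ :=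
  ∑ o, U i o * X i o

/-- `X` is fractionally Pareto-optimal: no allocation weakly dominates it with one strict gain. -/
def IsFPO (n m : ℕ) (U X : Fin n → Fin m → ℝ) : Prop :=
  ¬ ∃ Y, IsAlloc n m Y ∧ (∀ i, util U X i ≤ util U Y i) ∧ ∃ i, util U X i < util U Y i

/-- The consumption graph of allocation `X`: bipartite on agents ⊕ objects,
with an edge between agent `i` and object `o` iff `X i o > 0`. -/
def consGraph {n m : ℕ} (X : Fin n → Fin m → ℝ) : SimpleGraph (Fin n ⊕ Fin m) where
  Adj v w :=
    (∃ i o, v = Sum.inl i ∧ w = Sum.inr o ∧ 0 < X i o) ∨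
    (∃ i o, v = Sum.inr o ∧ w = Sum.inl i ∧ 0 < X i o)
  symm := by
    constructor
    rintro v w (⟨i, o, rfl, rfl, h⟩ | ⟨i, o, rfl, rfl, h⟩)
    · exact Or.inr ⟨i, o, rfl, rfl, h⟩
    · exact Or.inl ⟨i, o, rfl, rfl, h⟩
  loopless := by
    constructor
    rintro v (⟨i, o, rfl, h, _⟩ | ⟨i, o, rfl, h, _⟩) <;> simp_all


theorem consGraph_adj_isLeft {n m : ℕ} {Y : Fin n → Fin m → ℝ} {u v : Fin n ⊕ Fin m}
    (h : (consGraph Y).Adj u v) : v.isLeft = !u.isLeft := by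
  rcases h with ⟨i, o, rfl, rfl, _⟩ | ⟨i, o, rfl, rfl, _⟩ <;> rfl

theorem consGraph_adj_pos {n m : ℕ} {Y : Fin n → Fin m → ℝ} {i : Fin n} {o : Fin m}
    (h : (consGraph Y).Adj (Sum.inl i) (Sum.inr o) ∨ (consGraph Y).Adj (Sum.inr o) (Sum.inl i)) :
    0 < Y i o := by
  rcases h with (⟨i', o', h1, h2, hp⟩ | ⟨i', o', h1, h2, hp⟩) | (⟨i', o', h1, h2, hp⟩ | ⟨i', o', h1, h2, hp⟩) <;>
    simp_all <;> simp [← h1, ← h2] at hp ⊢ <;> exact hp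

theorem walk_support_getElem {V : Type*} {G : SimpleGraph V} {u v : V} (p : G.Walk u v) :
    ∀ (i : ℕ) (h : i < p.support.length), p.support[i] = p.getVert i := by
  induction p with
  | nil => intro i h; simp at h; subst h; simp
  | cons hadj q ih =>
    intro i h
    cases i with
    | zero => simp
    | succ i =>
      simp only [SimpleGraph.Walk.support_cons, List.getElem_cons_succ,
        SimpleGraph.Walk.getVert_cons_succ]
      exact ih i (by simpa [SimpleGraph.Walk.support_cons] using h)

theorem exists_cycle_struct {n m : ℕ} (Y : Fin n → Fin m → ℝ)
    (h : ¬ (consGraph Y).IsAcyclic) :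
    ∃ (k : ℕ), 2 ≤ k ∧ ∃ (I : ZMod k → Fin n) (O : ZMod k → Fin m),
      Function.Injective I ∧ Function.Injective O ∧
      (∀ t, 0 < Y (I t) (O t)) ∧ (∀ t, 0 < Y (I (t+1)) (O t)) := by
  rw [SimpleGraph.IsAcyclic] at h
  push_neg at h
  obtain ⟨v, w, hw⟩ := h
  have hL3 : 3 ≤ w.length := hw.three_le_length
  set L := w.length with hLdef
  haveI : NeZero L := ⟨by omega⟩
  haveI : Fact (1 < L) := ⟨by omega⟩
  -- the cyclic vertex function
  set W : ZMod L → (Fin n ⊕ Fin m) := fun x => w.getVert (x.val + 1) with hWdef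
  have hvaladd : ∀ x : ZMod L, (x + 1).val = (x.val + 1) % L := by
    intro x; rw [ZMod.val_add, ZMod.val_one]
  have hWadj : ∀ x : ZMod L, (consGraph Y).Adj (W x) (W (x + 1)) := by
    intro x
    have hxlt : x.val < L := ZMod.val_lt x
    rcases Nat.lt_or_ge (x.val + 1) L with hlt | hge
    · have h1 : (x + 1).val = x.val + 1 := by rw [hvaladd, Nat.mod_eq_of_lt hlt]
      have := w.adj_getVert_succ (i := x.val + 1) hlt
      simpa [hWdef, h1] using this
    · have hxL : x.val + 1 = L := by omega
      have h1 : (x + 1).val = 0 := by rw [hvaladd, hxL, Nat.mod_self]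
      have h2 : w.getVert (x.val + 1) = w.getVert 0 := by
        rw [hxL, hLdef, SimpleGraph.Walk.getVert_length, SimpleGraph.Walk.getVert_zero]
      have := w.adj_getVert_succ (i := 0) (by omega)
      simp only [hWdef, h1, h2]
      simpa using this
  have hWinj : Function.Injective W := by
    intro x y hxy
    have hx : x.val < w.support.tail.length := by
      simpa [SimpleGraph.Walk.length_support] using ZMod.val_lt x
    have hy : y.val < w.support.tail.length := by
      simpa [SimpleGraph.Walk.length_support] using ZMod.val_lt y
    have hxg : w.support.tail[x.val] = w.getVert (x.val + 1) := by
      rw [List.getElem_tail]; exact walk_support_getElem w _ _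
    have hyg : w.support.tail[y.val] = w.getVert (y.val + 1) := by
      rw [List.getElem_tail]; exact walk_support_getElem w _ _
    have heq : w.support.tail[x.val] = w.support.tail[y.val] := by
      rw [hxg, hyg]; exact hxy
    have := (List.Nodup.getElem_inj_iff hw.support_nodup).mp heq
    exact ZMod.val_injective L this
  -- parity
  have hflip : ∀ j, j < L → (w.getVert (j+1)).isLeft = !(w.getVert j).isLeft := by
    intro j hj
    exact consGraph_adj_isLeft (w.adj_getVert_succ hj)
  have hpar : ∀ j, j ≤ L → (w.getVert j).isLeft =
      if j % 2 = 0 then (w.getVert 0).isLeft else !(w.getVert 0).isLeft := by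
    intro j
    induction j with
    | zero => simp
    | succ j ih =>
      intro hj
      rw [hflip j (by omega), ih (by omega)]
      rcases Nat.even_or_odd j with he | ho
      · have h2 : j % 2 = 0 := Nat.even_iff.mp he
        have h3 : (j+1) % 2 = 1 := by omega
        simp [h2, h3]
      · have h2 : j % 2 = 1 := Nat.odd_iff.mp ho
        have h3 : (j+1) % 2 = 0 := by omega
        simp [h2, h3]
  have hLeven : L % 2 = 0 := by
    by_contra hodd
    have h0 : (w.getVert L).isLeft = (w.getVert 0).isLeft := by
      rw [hLdef, SimpleGraph.Walk.getVert_length, SimpleGraph.Walk.getVert_zero]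
    have := hpar L le_rfl
    rw [h0, if_neg hodd] at this
    simp at this
    exact absurd this (by cases v <;> simp)
  obtain ⟨k, hk⟩ : ∃ k, L = 2 * k := ⟨L / 2, by omega⟩
  have hk2 : 2 ≤ k := by omega
  haveI : NeZero k := ⟨by omega⟩
  haveI : Fact (1 < k) := ⟨by omega⟩
  -- the parity offset
  obtain ⟨ρ, hρle, hkey⟩ : ∃ ρ, ρ ≤ 1 ∧ ∀ j, j ≤ L →
      ((w.getVert j).isLeft = true ↔ j % 2 ≠ ρ % 2) := by
    cases hb : (w.getVert 0).isLeft with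
    | true =>
      refine ⟨1, le_rfl, fun j hj => ?_⟩
      rw [hpar j hj, hb]
      rcases Nat.even_or_odd j with he | ho
      · have h2 : j % 2 = 0 := Nat.even_iff.mp he; simp [h2]
      · have h2 : j % 2 = 1 := Nat.odd_iff.mp ho; simp [h2]
    | false =>
      refine ⟨0, by omega, fun j hj => ?_⟩
      rw [hpar j hj, hb]
      rcases Nat.even_or_odd j with he | ho
      · have h2 : j % 2 = 0 := Nat.even_iff.mp he; simp [h2]
      · have h2 : j % 2 = 1 := Nat.odd_iff.mp ho; simp [h2]
  -- agent and object positions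
  have hvalA : ∀ t : ZMod k, ((2 * t.val + ρ : ℕ) : ZMod L).val = 2 * t.val + ρ := by
    intro t
    have ht : t.val < k := ZMod.val_lt t
    rw [ZMod.val_natCast, Nat.mod_eq_of_lt (by omega)]
  have hA : ∀ t : ZMod k, ∃ i, W ((2 * t.val + ρ : ℕ) : ZMod L) = Sum.inl i := by
    intro t
    have hval := hvalA t
    have hle : ((2 * t.val + ρ : ℕ) : ZMod L).val + 1 ≤ L := by
      have := ZMod.val_lt ((2 * t.val + ρ : ℕ) : ZMod L); omega
    have hleft : (W ((2 * t.val + ρ : ℕ) : ZMod L)).isLeft = true := by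
      rw [hWdef]
      rw [hkey _ hle, hval]
      omega
    cases hWx : W ((2 * t.val + ρ : ℕ) : ZMod L) with
    | inl i => exact ⟨i, rfl⟩
    | inr o => rw [hWx] at hleft; simp at hleft
  have hB : ∀ t : ZMod k, ∃ o, W ((2 * t.val + ρ + 1 : ℕ) : ZMod L) = Sum.inr o := by
    intro t
    have hvmod : ((2 * t.val + ρ + 1 : ℕ) : ZMod L).val % 2 = (2 * t.val + ρ + 1) % 2 := by
      rw [ZMod.val_natCast, hk]
      exact Nat.mod_mod_of_dvd _ ⟨k, rfl⟩
    have hle : ((2 * t.val + ρ + 1 : ℕ) : ZMod L).val + 1 ≤ L := by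
      have := ZMod.val_lt ((2 * t.val + ρ + 1 : ℕ) : ZMod L); omega
    have hleft : (W ((2 * t.val + ρ + 1 : ℕ) : ZMod L)).isLeft = false := by
      show (w.getVert (((2 * t.val + ρ + 1 : ℕ) : ZMod L).val + 1)).isLeft = false
      have hiff := hkey (((2 * t.val + ρ + 1 : ℕ) : ZMod L).val + 1) hle
      rcases Bool.eq_false_or_eq_true ((w.getVert (((2 * t.val + ρ + 1 : ℕ) : ZMod L).val + 1)).isLeft) with hb | hb
      · exfalso
        have := hiff.mp hb
        omega
      · exact hb
    cases hWx : W ((2 * t.val + ρ + 1 : ℕ) : ZMod L) with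
    | inl i => rw [hWx] at hleft; simp at hleft
    | inr o => exact ⟨o, rfl⟩
  set I : ZMod k → Fin n := fun t => (hA t).choose with hI
  set O : ZMod k → Fin m := fun t => (hB t).choose with hO
  have hIspec : ∀ t, W ((2 * t.val + ρ : ℕ) : ZMod L) = Sum.inl (I t) := fun t => (hA t).choose_spec
  have hOspec : ∀ t, W ((2 * t.val + ρ + 1 : ℕ) : ZMod L) = Sum.inr (O t) := fun t => (hB t).choose_spec
  -- ZMod equalities between positions
  have hxOA : ∀ t : ZMod k, ((2 * t.val + ρ + 1 : ℕ) : ZMod L) = ((2 * t.val + ρ : ℕ) : ZMod L) + 1 := by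
    intro t; push_cast; ring
  have hnext : ∀ t : ZMod k, ((2 * t.val + ρ + 1 : ℕ) : ZMod L) + 1 = ((2 * (t+1).val + ρ : ℕ) : ZMod L) := by
    intro t
    have hval : (t + 1).val = (t.val + 1) % k := by
      rw [ZMod.val_add, ZMod.val_one]
    have e1 : (t.val + 1) % k ≡ t.val + 1 [MOD k] := Nat.mod_modEq _ _
    have e2 := e1.mul_left' (c := 2)
    have e3 := e2.add_right ρ
    have e4 : 2 * ((t.val + 1) % k) + ρ ≡ 2 * t.val + ρ + 1 + 1 [MOD L] := by
      rw [hk]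
      have : 2 * (t.val + 1) + ρ = 2 * t.val + ρ + 1 + 1 := by ring
      rw [← this]
      exact e3
    have key : ((2 * (t+1).val + ρ : ℕ) : ZMod L) = ((2 * t.val + ρ + 1 + 1 : ℕ) : ZMod L) := by
      rw [hval, (ZMod.natCast_eq_natCast_iff _ _ _)]
      exact e4
    rw [key]; push_cast; ring
  -- positivity
  have hYp : ∀ t, 0 < Y (I t) (O t) := by
    intro t
    have := hWadj ((2 * t.val + ρ : ℕ) : ZMod L)
    rw [← hxOA t, hIspec t, hOspec t] at this
    exact consGraph_adj_pos (Or.inl this)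
  have hYq : ∀ t, 0 < Y (I (t + 1)) (O t) := by
    intro t
    have := hWadj ((2 * t.val + ρ + 1 : ℕ) : ZMod L)
    rw [hnext t, hIspec (t + 1), hOspec t] at this
    exact consGraph_adj_pos (Or.inr this)
  have hIinj : Function.Injective I := by
    intro t t' htt
    have heq : W ((2 * t.val + ρ : ℕ) : ZMod L) = W ((2 * t'.val + ρ : ℕ) : ZMod L) := by
      rw [hIspec t, hIspec t', htt]
    have hx := hWinj heq
    have hv := congrArg ZMod.val hx
    rw [hvalA t, hvalA t'] at hv
    exact ZMod.val_injective k (by omega)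
  have hOinj : Function.Injective O := by
    intro t t' htt
    have heq : W ((2 * t.val + ρ + 1 : ℕ) : ZMod L) = W ((2 * t'.val + ρ + 1 : ℕ) : ZMod L) := by
      rw [hOspec t, hOspec t', htt]
    have hx := hWinj heq
    rw [hxOA t, hxOA t'] at hx
    have hx2 := add_right_cancel hx
    have hv := congrArg ZMod.val hx2
    rw [hvalA t, hvalA t'] at hv
    exact ZMod.val_injective k (by omega)
  exact ⟨k, hk2, I, O, hIinj, hOinj, hYp, hYq⟩

theorem exists_ne_zero_nonneg {ι : Type*} [Fintype ι] [Nonempty ι] [DecidableEq ι]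
    (f : (ι → ℝ) →ₗ[ℝ] (ι → ℝ)) : ∃ a : ι → ℝ, a ≠ 0 ∧ ∀ t, 0 ≤ f a t := by
  by_cases h : Function.Injective f
  · obtain ⟨a, ha⟩ := (LinearMap.injective_iff_surjective.mp h) (fun _ => (1:ℝ))
    refine ⟨a, ?_, ?_⟩
    · rintro rfl
      have := congrFun ha (Classical.arbitrary ι)
      simp at this
    · intro t; rw [ha]; norm_num
  · rw [Function.not_injective_iff] at h
    obtain ⟨x, y, hxy, hne⟩ := h
    exact ⟨x - y, sub_ne_zero_of_ne hne, fun t => by simp [hxy, sub_eq_zero.mpr (congrFun hxy t)]⟩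

theorem main_contra (n m : ℕ) (U Y : Fin n → Fin m → ℝ) (c : Fin n → ℝ)
    (hY : IsAlloc n m Y) (hYc : ∀ i, c i ≤ util U Y i)
    (hext : ∀ Y₁ Y₂ : Fin n → Fin m → ℝ,
      IsAlloc n m Y₁ → (∀ i, c i ≤ util U Y₁ i) →
      IsAlloc n m Y₂ → (∀ i, c i ≤ util U Y₂ i) →
      Y = (fun i o => (Y₁ i o + Y₂ i o) / 2) → Y₁ = Y₂)
    (hmax : ∀ Y' : Fin n → Fin m → ℝ, IsAlloc n m Y' → (∀ i, c i ≤ util U Y' i) →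
      ∑ i, util U Y' i ≤ ∑ i, util U Y i)
    (k : ℕ) (hk2 : 2 ≤ k) (I : ZMod k → Fin n) (O : ZMod k → Fin m)
    (hIinj : Function.Injective I) (hOinj : Function.Injective O)
    (hYp : ∀ t, 0 < Y (I t) (O t)) (hYq : ∀ t, 0 < Y (I (t+1)) (O t)) : False := by
  haveI : NeZero k := ⟨by omega⟩
  haveI : Fact (1 < k) := ⟨by omega⟩
  set p : ZMod k → ℝ := fun t => U (I t) (O t) with hp
  set q : ZMod k → ℝ := fun t => U (I (t+1)) (O t) with hq
  set f : (ZMod k → ℝ) →ₗ[ℝ] (ZMod k → ℝ) :=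
    { toFun := fun a s => q (s-1) * a (s-1) - p s * a s
      map_add' := by intro x y; funext s; simp only [Pi.add_apply]; ring
      map_smul' := by intro c x; funext s; simp only [Pi.smul_apply, smul_eq_mul,
        RingHom.id_apply]; ring } with hf
  obtain ⟨a, ha0, hfa⟩ := exists_ne_zero_nonneg f
  obtain ⟨s₀, has₀⟩ := Function.ne_iff.mp ha0
  simp only [Pi.zero_apply] at has₀
  set δ : Fin n → Fin m → ℝ := fun i o => ∑ t : ZMod k,
    (if o = O t then ((if i = I (t+1) then a t else 0) - (if i = I t then a t else 0)) else 0)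
    with hδ
  -- column sums vanish
  have hδcol : ∀ o, ∑ i, δ i o = 0 := by
    intro o
    rw [hδ, Finset.sum_comm]
    apply Finset.sum_eq_zero
    intro t _
    by_cases h : o = O t
    · simp [h, Finset.sum_sub_distrib, Finset.sum_ite_eq']
    · simp [h]
  -- diagonal entries
  have hne1 : ∀ s : ZMod k, I s ≠ I (s + 1) := by
    intro s h
    have := hIinj h
    have h1 : (1 : ZMod k) = 0 := by
      have := left_eq_add.mp this
      exact this
    exact one_ne_zero h1
  have hδdiag : ∀ s, δ (I s) (O s) = -(a s) := by
    intro s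
    rw [hδ]
    have hterm : ∀ t : ZMod k,
        (if O s = O t then ((if I s = I (t+1) then a t else 0) - (if I s = I t then a t else 0)) else 0)
        = (if t = s then -(a t) else 0) := by
      intro t
      by_cases h : t = s
      · subst h
        simp [hne1 t]
      · rw [if_neg, if_neg h]
        exact fun hc => h (hOinj hc).symm
    calc ∑ t : ZMod k, (if O s = O t then ((if I s = I (t+1) then a t else 0) - (if I s = I t then a t else 0)) else 0)
        = ∑ t : ZMod k, (if t = s then -(a t) else 0) := Finset.sum_congr rfl (fun t _ => hterm t)
      _ = -(a s) := by simp [Finset.sum_ite_eq']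
  -- utility change
  set d : Fin n → ℝ := fun i => ∑ o, U i o * δ i o with hd
  have hfapp : ∀ (b : ZMod k → ℝ) s, f b s = q (s-1) * b (s-1) - p s * b s := fun b s => rfl
  have hdutil : ∀ i, d i = ∑ t : ZMod k, (if i = I t then f a t else 0) := by
    intro i
    calc d i = ∑ o, ∑ t : ZMod k, U i o *
          (if o = O t then ((if i = I (t+1) then a t else 0) - (if i = I t then a t else 0)) else 0) := by
          rw [hd]; exact Finset.sum_congr rfl (fun o _ => Finset.mul_sum _ _ _)
      _ = ∑ t : ZMod k, ∑ o, U i o *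
          (if o = O t then ((if i = I (t+1) then a t else 0) - (if i = I t then a t else 0)) else 0) :=
          Finset.sum_comm
      _ = ∑ t : ZMod k, U i (O t) * ((if i = I (t+1) then a t else 0) - (if i = I t then a t else 0)) := by
          refine Finset.sum_congr rfl (fun t _ => ?_)
          simp only [mul_ite, mul_zero]
          simp [Finset.sum_ite_eq']
      _ = ∑ t : ZMod k, ((if i = I (t+1) then U i (O t) * a t else 0) - (if i = I t then U i (O t) * a t else 0)) := by
          refine Finset.sum_congr rfl (fun t _ => ?_)
          simp only [mul_sub, mul_ite, mul_zero]
      _ = (∑ t : ZMod k, (if i = I (t+1) then U i (O t) * a t else 0))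
          - ∑ t : ZMod k, (if i = I t then U i (O t) * a t else 0) := Finset.sum_sub_distrib _ _
      _ = (∑ s : ZMod k, (if i = I s then U i (O (s-1)) * a (s-1) else 0))
          - ∑ s : ZMod k, (if i = I s then U i (O s) * a s else 0) := by
          congr 1
          exact Fintype.sum_equiv (Equiv.addRight (1 : ZMod k)) _ _
            (fun t => by simp [Equiv.coe_addRight, add_sub_cancel_right])
      _ = ∑ s : ZMod k, ((if i = I s then U i (O (s-1)) * a (s-1) else 0)
          - (if i = I s then U i (O s) * a s else 0)) := (Finset.sum_sub_distrib _ _).symm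
      _ = ∑ s : ZMod k, (if i = I s then f a s else 0) := by
          refine Finset.sum_congr rfl (fun s _ => ?_)
          by_cases h : i = I s
          · rw [if_pos h, if_pos h, if_pos h, hfapp, hp, hq]
            simp only
            rw [sub_add_cancel, ← h]
          · simp [h]
  -- nonnegativity of utility changes
  have hdnn : ∀ i, 0 ≤ d i := by
    intro i
    rw [hdutil i]
    refine Finset.sum_nonneg (fun t _ => ?_)
    by_cases h : i = I t
    · rw [if_pos h]; exact hfa t
    · rw [if_neg h]
  have hdI : ∀ s, d (I s) = f a s := by
    intro s
    rw [hdutil (I s)]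
    have hterm : ∀ t : ZMod k, (if I s = I t then f a t else 0) = (if t = s then f a t else 0) := by
      intro t
      by_cases h : t = s
      · subst h; simp
      · rw [if_neg (fun hc => h (hIinj hc).symm), if_neg h]
    rw [Finset.sum_congr rfl (fun t _ => hterm t)]
    simp [Finset.sum_ite_eq']
  -- bound on entries of δ
  set B : ℝ := ∑ t : ZMod k, 2 * |a t| with hB
  have hB0 : 0 ≤ B := Finset.sum_nonneg (fun t _ => by positivity)
  have hδbound : ∀ i o, |δ i o| ≤ B := by
    intro i o
    rw [hδ]
    refine (Finset.abs_sum_le_sum_abs _ _).trans (Finset.sum_le_sum (fun t _ => ?_))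
    by_cases h : o = O t
    · rw [if_pos h]
      refine (abs_sub _ _).trans ?_
      have h1 : |if i = I (t+1) then a t else 0| ≤ |a t| := by
        split_ifs <;> simp [abs_nonneg]
      have h2 : |if i = I t then a t else 0| ≤ |a t| := by
        split_ifs <;> simp [abs_nonneg]
      linarith
    · rw [if_neg h]; simp
  -- entries with δ ≠ 0 are on the cycle
  haveI : Nonempty (ZMod k) := ⟨0⟩
  set Ymin : ℝ := Finset.univ.inf' Finset.univ_nonempty
    (fun t : ZMod k => min (Y (I t) (O t)) (Y (I (t+1)) (O t))) with hYmin
  have hYmin0 : 0 < Ymin := by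
    rw [hYmin, Finset.lt_inf'_iff]
    exact fun t _ => lt_min (hYp t) (hYq t)
  have hδsupp : ∀ i o, δ i o ≠ 0 → Ymin ≤ Y i o := by
    intro i o hne
    rw [hδ] at hne
    obtain ⟨t, _, hterm⟩ := Finset.exists_ne_zero_of_sum_ne_zero hne
    by_cases h : o = O t
    · rw [if_pos h] at hterm
      by_cases h1 : i = I (t+1)
      · subst h; rw [h1]
        exact le_trans (Finset.inf'_le _ (Finset.mem_univ t)) (min_le_right _ _)
      · rw [if_neg h1] at hterm
        by_cases h2 : i = I t
        · subst h; rw [h2]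
          exact le_trans (Finset.inf'_le _ (Finset.mem_univ t)) (min_le_left _ _)
        · rw [if_neg h2] at hterm; simp at hterm
    · rw [if_neg h] at hterm; simp at hterm
  -- the perturbation size
  set ε : ℝ := Ymin / (B + 1) with hε
  have hε0 : 0 < ε := by rw [hε]; positivity
  have hεB : ε * B < Ymin := by
    have h1 : ε * (B + 1) = Ymin := div_mul_cancel₀ _ (by positivity)
    nlinarith
  have hentry : ∀ (σ : ℝ), |σ| = 1 → ∀ i o, 0 ≤ Y i o + σ * ε * δ i o := by
    intro σ hσ i o
    by_cases h : δ i o = 0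
    · rw [h]; simpa using hY.1 i o
    · have h1 : |σ * ε * δ i o| ≤ ε * B := by
        rw [abs_mul, abs_mul, hσ, one_mul, abs_of_pos hε0]
        exact mul_le_mul_of_nonneg_left (hδbound i o) (le_of_lt hε0)
      have h2 := hδsupp i o h
      have := neg_abs_le (σ * ε * δ i o)
      linarith
  -- the perturbed allocations
  have halloc : ∀ (σ : ℝ), |σ| = 1 → IsAlloc n m (fun i o => Y i o + σ * ε * δ i o) := by
    intro σ hσ
    refine ⟨hentry σ hσ, fun o => ?_⟩
    rw [Finset.sum_add_distrib, hY.2 o]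
    have : ∑ i, σ * ε * δ i o = σ * ε * ∑ i, δ i o := by rw [Finset.mul_sum]
    rw [this, hδcol o, mul_zero, add_zero]
  have hutil : ∀ (σ : ℝ) i, util U (fun i o => Y i o + σ * ε * δ i o) i = util U Y i + σ * ε * d i := by
    intro σ i
    have hterm : ∀ o : Fin m, U i o * (Y i o + σ * ε * δ i o)
        = U i o * Y i o + σ * ε * (U i o * δ i o) := fun o => by ring
    simp only [util, hd]
    rw [Finset.sum_congr rfl (fun o _ => hterm o), Finset.sum_add_distrib, ← Finset.mul_sum]
  -- case split
  by_cases hdz : ∀ i, d i = 0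
  · -- extreme point contradiction
    have h1 : IsAlloc n m (fun i o => Y i o + 1 * ε * δ i o) := halloc 1 (by norm_num)
    have h2 : IsAlloc n m (fun i o => Y i o + (-1) * ε * δ i o) := halloc (-1) (by norm_num)
    have hc1 : ∀ i, c i ≤ util U (fun i o => Y i o + 1 * ε * δ i o) i := by
      intro i; rw [hutil 1 i, hdz i]; simpa using hYc i
    have hc2 : ∀ i, c i ≤ util U (fun i o => Y i o + (-1) * ε * δ i o) i := by
      intro i; rw [hutil (-1) i, hdz i]; simpa using hYc i
    have heq := hext _ _ h1 hc1 h2 hc2 (by funext i o; ring)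
    have := congrFun (congrFun heq (I s₀)) (O s₀)
    rw [hδdiag s₀] at this
    have : ε * a s₀ = 0 := by linarith
    rcases mul_eq_zero.mp this with h | h
    · exact absurd h (ne_of_gt hε0)
    · exact has₀ h
  · -- welfare contradiction
    push_neg at hdz
    obtain ⟨i₀, hi₀⟩ := hdz
    have hsum : 0 < ∑ i, d i :=
      Finset.sum_pos' (fun i _ => hdnn i) ⟨i₀, Finset.mem_univ _, lt_of_le_of_ne (hdnn i₀) (Ne.symm hi₀)⟩
    have h1 : IsAlloc n m (fun i o => Y i o + 1 * ε * δ i o) := halloc 1 (by norm_num)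
    have hc1 : ∀ i, c i ≤ util U (fun i o => Y i o + 1 * ε * δ i o) i := by
      intro i
      rw [hutil 1 i]
      have := hdnn i
      have := hYc i
      nlinarith
    have := hmax _ h1 hc1
    rw [Finset.sum_congr rfl (fun i _ => hutil 1 i), Finset.sum_add_distrib] at this
    have hpos : 0 < ∑ i, 1 * ε * d i := by
      have : ∑ i, 1 * ε * d i = ε * ∑ i, d i := by
        rw [Finset.mul_sum]; exact Finset.sum_congr rfl (fun i _ => by ring)
      rw [this]; positivity
    linarith


/-- An extreme point of the polytope of fractional allocations with utility lower bounds,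
which maximizes the utilitarian sum over that polytope, has an acyclic consumption graph. -/
theorem extreme_point_max_acyclic (n m : ℕ) (U Y : Fin n → Fin m → ℝ) (c : Fin n → ℝ)
    (hY : IsAlloc n m Y) (hYc : ∀ i, c i ≤ util U Y i)
    (hext : ∀ Y₁ Y₂ : Fin n → Fin m → ℝ,
      IsAlloc n m Y₁ → (∀ i, c i ≤ util U Y₁ i) →
      IsAlloc n m Y₂ → (∀ i, c i ≤ util U Y₂ i) →
      Y = (fun i o => (Y₁ i o + Y₂ i o) / 2) → Y₁ = Y₂)
    (hmax : ∀ Y' : Fin n → Fin m → ℝ, IsAlloc n m Y' → (∀ i, c i ≤ util U Y' i) →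
      ∑ i, util U Y' i ≤ ∑ i, util U Y i) :
    (consGraph Y).IsAcyclic := by
  by_contra hcyc
  obtain ⟨k, hk2, I, O, hIinj, hOinj, hYp, hYq⟩ := exists_cycle_struct Y hcyc
  exact main_contra n m U Y c hY hYc hext hmax k hk2 I O hIinj hOinj hYp hYq
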